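/- Let R ⊆ ℝ^n be an n-dimensional polytope with n·Δ_n ⊆ R ⊆ ℝ^n_{≥0}, such that R − 𝟙 is a reflexive polytope (where 𝟙 = (1,…,1)), the barycenter of R is 𝟙, and vol(R) = (n+1)^n/n!. Then R = (n+1)Δ_n. -/

import Mathlib

open MeasureTheory

/-- A set is a lattice polytope if it is the convex hull of finitely many integer points. -/
def IsLatticePolytope {n : ℕ} (P : Set (Fin n → ℝ)) : Prop :=
  ∃ V : Set (Fin n → ℝ), V.Finite ∧ (∀ v ∈ V, ∀ i, ∃ m : ℤ, v i = (m : ℝ)) ∧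
    P = convexHull ℝ V

/-- The dual polytope `P* = {x : ⟨y,x⟩ ≥ −1 for all y ∈ P}`. -/
def dualBody {n : ℕ} (P : Set (Fin n → ℝ)) : Set (Fin n → ℝ) :=
  {x | ∀ y ∈ P, -1 ≤ ∑ i, y i * x i}

/-- A reflexive polytope: a lattice polytope with `0` in its interior whose dual is
again a lattice polytope. -/
def IsReflexive {n : ℕ} (P : Set (Fin n → ℝ)) : Prop :=
  IsLatticePolytope P ∧ (0 : Fin n → ℝ) ∈ interior P ∧ IsLatticePolytope (dualBody P)

/-- The unimodular simplex `Δₙ = conv(0, e₁, …, eₙ)`. -/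
def unimodularSimplex (n : ℕ) : Set (Fin n → ℝ) :=
  convexHull ℝ (insert (0 : Fin n → ℝ) (Set.range fun i => Pi.single i (1 : ℝ)))

namespace EqAux
open Set


def Simp (n : ℕ) (c : ℝ) : Set (Fin n → ℝ) := {x | (∀ i, 0 ≤ x i) ∧ ∑ i, x i ≤ c}

lemma continuous_sum (n : ℕ) : Continuous (fun x : Fin n → ℝ => ∑ i, x i) :=
  continuous_finset_sum _ fun i _ => continuous_apply i

lemma isClosed_simp (n : ℕ) (c : ℝ) : IsClosed (Simp n c) := by
  have h1 : Simp n c = (⋂ i, (fun x : Fin n → ℝ => x i) ⁻¹' Ici 0) ∩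
      ((fun x : Fin n → ℝ => ∑ i, x i) ⁻¹' Iic c) := by
    ext x; simp [Simp, forall_and]
  rw [h1]
  exact IsClosed.inter (isClosed_iInter fun i => isClosed_Ici.preimage (continuous_apply i))
    (isClosed_Iic.preimage (continuous_sum n))

lemma simp_subset_pi (n : ℕ) (c : ℝ) : Simp n c ⊆ Set.pi Set.univ fun _ => Icc (0:ℝ) c :=
  fun x hx i _ => ⟨hx.1 i,
    le_trans (Finset.single_le_sum (fun j _ => hx.1 j) (Finset.mem_univ i)) hx.2⟩

lemma isCompact_simp (n : ℕ) (c : ℝ) : IsCompact (Simp n c) :=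
  IsCompact.of_isClosed_subset (isCompact_univ_pi fun _ => isCompact_Icc)
    (isClosed_simp n c) (simp_subset_pi n c)

lemma simp_mono (n : ℕ) {c d : ℝ} (h : c ≤ d) : Simp n c ⊆ Simp n d :=
  fun x hx => ⟨hx.1, hx.2.trans h⟩

lemma image_step (n : ℕ) (c : ℝ) :
    (MeasurableEquiv.piFinSuccAbove (fun _ : Fin (n+1) => ℝ) 0) '' Simp (n+1) c =
      {p : ℝ × (Fin n → ℝ) | 0 ≤ p.1 ∧ (∀ i, 0 ≤ p.2 i) ∧ p.1 + ∑ i, p.2 i ≤ c} := by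
  rw [MeasurableEquiv.image_eq_preimage_symm]
  ext p
  obtain ⟨t, y⟩ := p
  have he : (MeasurableEquiv.piFinSuccAbove (fun _ : Fin (n+1) => ℝ) 0).symm (t, y)
      = Fin.cons t y := by
    rw [MeasurableEquiv.piFinSuccAbove_symm_apply]
    simp [Fin.insertNthEquiv, Fin.insertNth_zero]
  simp only [Set.mem_preimage, Set.mem_setOf_eq, Simp]
  rw [he]
  constructor
  · rintro ⟨h1, h2⟩
    refine ⟨h1 0, fun i => by simpa using h1 i.succ, ?_⟩
    simpa [Fin.sum_cons] using h2
  · rintro ⟨h1, h2, h3⟩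
    constructor
    · intro i
      refine Fin.cases ?_ ?_ i
      · simpa using h1
      · intro j; simpa using h2 j
    · simpa [Fin.sum_cons] using h3

lemma simp_setIntegral (n : ℕ) : ∀ (k : ℕ) {c : ℝ}, 0 ≤ c →
    ∫ x in Simp n c, (c - ∑ i, x i) ^ k
      = c ^ (n + k) * (k.factorial : ℝ) / ((n + k).factorial : ℝ) := by
  induction n with
  | zero =>
    intro k c hc
    have huniv : Simp 0 c = Set.univ := by
      ext x; simp [Simp, hc, Finset.univ_eq_empty]
    have hvol : volume (Set.univ : Set (Fin 0 → ℝ)) = 1 := by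
      rw [MeasureTheory.volume_pi, Measure.pi_univ]; simp
    rw [huniv, Measure.restrict_univ]
    have hfun : (fun x : Fin 0 → ℝ => (c - ∑ i, x i) ^ k) = fun _ => c ^ k := by
      funext x; simp
    rw [hfun, integral_const, measureReal_def, hvol]
    have hk : (k.factorial : ℝ) ≠ 0 := Nat.cast_ne_zero.mpr k.factorial_ne_zero
    field_simp
    simp
  | succ n ih =>
    intro k c hc
    set e := MeasurableEquiv.piFinSuccAbove (fun _ : Fin (n+1) => ℝ) 0 with he
    set A : Set (ℝ × (Fin n → ℝ)) :=
      {p : ℝ × (Fin n → ℝ) | 0 ≤ p.1 ∧ (∀ i, 0 ≤ p.2 i) ∧ p.1 + ∑ i, p.2 i ≤ c} with hA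
    set gp : ℝ × (Fin n → ℝ) → ℝ := fun p => (c - (p.1 + ∑ i, p.2 i)) ^ k with hgp
    -- transfer the integral to the product space
    have h1 : ∫ p in A, gp p = ∫ x in Simp (n+1) c, (c - ∑ i, x i) ^ k := by
      rw [hA, ← image_step n c]
      rw [(volume_preserving_piFinSuccAbove (fun _ : Fin (n+1) => ℝ) 0).setIntegral_image_emb
        (MeasurableEquiv.measurableEmbedding _) gp (Simp (n+1) c)]
      refine setIntegral_congr_fun (by exact (isClosed_simp (n+1) c).measurableSet) fun x _ => ?_
      have hex : e x = (x 0, fun j => x (Fin.succAbove 0 j)) := by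
        rw [he, MeasurableEquiv.piFinSuccAbove_apply]
        simp only [Fin.insertNthEquiv, Equiv.coe_fn_symm_mk]
        exact rfl
      show gp (e x) = _
      rw [hex, hgp]
      simp only []
      rw [← Fin.sum_univ_succAbove x 0]
    have hAmeas : MeasurableSet A := by
      have hAeq : A = ((fun p : ℝ × (Fin n → ℝ) => p.1) ⁻¹' Ici 0) ∩
          ((⋂ i, (fun p : ℝ × (Fin n → ℝ) => p.2 i) ⁻¹' Ici 0)) ∩
          ((fun p : ℝ × (Fin n → ℝ) => p.1 + ∑ i, p.2 i) ⁻¹' Iic c) := by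
        rw [hA]; ext p; simp only [Set.mem_setOf_eq, Set.mem_inter_iff, Set.mem_preimage,
          Set.mem_iInter, Set.mem_Ici, Set.mem_Iic]; tauto
      rw [hAeq]
      refine (MeasurableSet.inter (MeasurableSet.inter ?_ ?_) ?_)
      · exact measurableSet_preimage (by fun_prop) measurableSet_Ici
      · exact MeasurableSet.iInter fun i =>
          measurableSet_preimage (by fun_prop) measurableSet_Ici
      · refine measurableSet_preimage ?_ measurableSet_Iic
        exact measurable_fst.add (((continuous_sum n).measurable).comp measurable_snd)
    have hrect : A ⊆ (Icc (0:ℝ) c) ×ˢ Simp n c := by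
      rintro ⟨t, y⟩ ⟨ha1, ha2, ha3⟩
      have hsum : 0 ≤ ∑ i, y i := Finset.sum_nonneg fun i _ => ha2 i
      exact ⟨⟨ha1, by linarith⟩, ⟨ha2, by linarith⟩⟩
    have hgpcont : Continuous gp :=
      (continuous_const.sub (continuous_fst.add ((continuous_sum n).comp continuous_snd))).pow k
    have hcompact : IsCompact ((Icc (0:ℝ) c) ×ˢ Simp n c) :=
      isCompact_Icc.prod (isCompact_simp n c)
    have hintrect : IntegrableOn gp ((Icc (0:ℝ) c) ×ˢ Simp n c) :=
      hgpcont.continuousOn.integrableOn_compact hcompact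
    have hind : IntegrableOn (A.indicator gp) ((Icc (0:ℝ) c) ×ˢ Simp n c) :=
      hintrect.indicator hAmeas
    have h2 : ∫ p in A, gp p = ∫ p in ((Icc (0:ℝ) c) ×ˢ Simp n c), A.indicator gp p := by
      rw [setIntegral_indicator hAmeas, Set.inter_eq_self_of_subset_right hrect]
    have hvp : (volume : Measure (ℝ × (Fin n → ℝ))) = (volume : Measure ℝ).prod volume :=
      Measure.volume_eq_prod ℝ (Fin n → ℝ)
    have h3 : ∫ p in ((Icc (0:ℝ) c) ×ˢ Simp n c), A.indicator gp p
        = ∫ t in Icc (0:ℝ) c, ∫ y in Simp n c, A.indicator gp (t, y) := by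
      rw [hvp]
      exact setIntegral_prod _ (by rw [← hvp]; exact hind)
    have h4 : ∀ t ∈ Icc (0:ℝ) c, (∫ y in Simp n c, A.indicator gp (t, y))
        = (c - t) ^ (n + k) * (k.factorial : ℝ) / ((n + k).factorial : ℝ) := by
      intro t ht
      have hmem : ∀ y : Fin n → ℝ, ((t, y) ∈ A) ↔ y ∈ Simp n (c - t) := by
        intro y
        constructor
        · rintro ⟨_, hb2, hb3⟩; exact ⟨hb2, by simp only [Simp] at *; linarith⟩
        · rintro ⟨hb2, hb3⟩
          refine ⟨ht.1, hb2, ?_⟩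
          simp only [Simp, Set.mem_setOf_eq] at hb3 ⊢
          linarith
      have hslice : (fun y => A.indicator gp (t, y))
          = (Simp n (c - t)).indicator (fun y => ((c - t) - ∑ i, y i) ^ k) := by
        funext y
        by_cases hy : (t, y) ∈ A
        · rw [Set.indicator_of_mem hy, Set.indicator_of_mem ((hmem y).mp hy)]
          simp only [hgp]
          ring_nf
        · rw [Set.indicator_of_notMem hy,
            Set.indicator_of_notMem (fun h => hy ((hmem y).mpr h))]
      rw [hslice, setIntegral_indicator (isClosed_simp n (c - t)).measurableSet,
        Set.inter_eq_self_of_subset_right (simp_mono n (by linarith [ht.1] : c - t ≤ c))]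
      exact ih k (by linarith [ht.2])
    have h5 : ∫ t in Icc (0:ℝ) c, ∫ y in Simp n c, A.indicator gp (t, y)
        = ∫ t in Icc (0:ℝ) c,
            (c - t) ^ (n + k) * (k.factorial : ℝ) / ((n + k).factorial : ℝ) :=
      setIntegral_congr_fun measurableSet_Icc h4
    have h6 : ∫ t in Icc (0:ℝ) c, (c - t) ^ (n + k) = c ^ (n + k + 1) / (n + k + 1) := by
      rw [integral_Icc_eq_integral_Ioc, ← intervalIntegral.integral_of_le hc,
        intervalIntegral.integral_comp_sub_left (fun x => x ^ (n + k)) c]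
      simp only [sub_self, sub_zero]
      rw [integral_pow]
      rw [zero_pow (by omega : n + k + 1 ≠ 0)]
      push_cast; ring
    rw [← h1, h2, h3, h5]
    simp only [div_eq_mul_inv]
    rw [MeasureTheory.integral_mul_const, MeasureTheory.integral_mul_const, h6]
    have hf1 : (((n + 1) + k).factorial : ℝ) = ((n + k : ℕ) + 1) * ((n + k).factorial : ℝ) := by
      rw [show (n + 1) + k = (n + k) + 1 from by omega, Nat.factorial_succ]
      push_cast; ring
    have hne1 : ((n + k).factorial : ℝ) ≠ 0 := Nat.cast_ne_zero.mpr (Nat.factorial_ne_zero _)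
    have hne2 : ((n + k : ℕ) : ℝ) + 1 ≠ 0 := by positivity
    rw [hf1, show n + 1 + k = n + k + 1 from by omega]
    field_simp
    push_cast; ring


lemma mem_simp_iff {n : ℕ} {c : ℝ} {x : Fin n → ℝ} :
    x ∈ Simp n c ↔ (∀ i, 0 ≤ x i) ∧ ∑ i, x i ≤ c := Iff.rfl

lemma simp_volume (n : ℕ) {c : ℝ} (hc : 0 ≤ c) :
    volume (Simp n c) = ENNReal.ofReal (c ^ n / (n.factorial : ℝ)) := by
  have h := simp_setIntegral n 0 hc
  simp only [pow_zero, Nat.add_zero, Nat.factorial_zero, Nat.cast_one, mul_one] at h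
  rw [setIntegral_const, smul_eq_mul, mul_one] at h
  rw [← h, measureReal_def, ENNReal.ofReal_toReal (isCompact_simp n c).measure_lt_top.ne]


lemma convex_simp (n : ℕ) (c : ℝ) : Convex ℝ (Simp n c) := by
  have h1 : Simp n c = (⋂ i, {x : Fin n → ℝ | 0 ≤ x i}) ∩ {x | ∑ i, x i ≤ c} := by
    ext x; simp [Simp, forall_and]
  rw [h1]
  refine Convex.inter (convex_iInter fun i => convex_halfSpace_ge ?_ 0)
    (convex_halfSpace_le ?_ c)
  · exact ⟨fun _ _ => rfl, fun _ _ => rfl⟩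
  · exact ⟨fun x y => Finset.sum_add_distrib, fun r x => by simp [Finset.mul_sum]⟩

lemma sum_smul_single (n : ℕ) (x : Fin n → ℝ) :
    ∑ i, x i • (Pi.single i (1:ℝ) : Fin n → ℝ) = x := by
  funext j
  rw [Finset.sum_apply]
  have : ∀ i, (x i • (Pi.single i (1:ℝ) : Fin n → ℝ)) j = if j = i then x i else 0 := by
    intro i
    rw [Pi.smul_apply, Pi.single_apply, smul_eq_mul]
    split <;> simp
  rw [Finset.sum_congr rfl fun i _ => this i]
  simp

lemma unimodular_eq (n : ℕ) : unimodularSimplex n = Simp n 1 := by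
  apply Set.Subset.antisymm
  · apply convexHull_min
    · rintro v hv
      rcases Set.mem_insert_iff.mp hv with rfl | ⟨i, rfl⟩
      · exact ⟨fun i => le_refl 0, by simp⟩
      · constructor
        · intro j
          simp only [Pi.single_apply]
          split <;> norm_num
        · simp only [Pi.single_apply]
          simp
    · exact convex_simp n 1
  · intro x hx
    classical
    set w : Option (Fin n) → ℝ := fun o => o.elim (1 - ∑ j, x j) (fun i => x i) with hw
    set z : Option (Fin n) → (Fin n → ℝ) := fun o => o.elim 0 (fun i => Pi.single i 1) with hz
    have hw0 : ∀ o ∈ Finset.univ, 0 ≤ w o := by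
      rintro (_ | i) _
      · simp only [hw, Option.elim]
        linarith [hx.2]
      · exact hx.1 i
    have hsum1 : ∑ o : Option (Fin n), w o = 1 := by
      rw [Fintype.sum_option]
      simp only [hw, Option.elim]
      ring
    have hzs : ∀ o ∈ Finset.univ, z o ∈ insert (0 : Fin n → ℝ)
        (Set.range fun i => Pi.single i (1:ℝ)) := by
      rintro (_ | i) _
      · exact Set.mem_insert _ _
      · exact Set.mem_insert_of_mem _ (Set.mem_range_self i)
    have hmem := Finset.univ.centerMass_mem_convexHull hw0
      (by rw [hsum1]; exact zero_lt_one) hzs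
    have hcm : Finset.univ.centerMass w z = x := by
      rw [Finset.centerMass_eq_of_sum_1 _ _ hsum1, Fintype.sum_option]
      simp only [hw, hz, Option.elim]
      rw [smul_zero, zero_add, sum_smul_single]
    rw [hcm] at hmem
    exact hmem

lemma image_smul (n : ℕ) {c : ℝ} (hc : 0 < c) :
    ((c • ·) '' unimodularSimplex n) = Simp n c := by
  rw [unimodular_eq]
  ext y
  constructor
  · rintro ⟨x, ⟨hx1, hx2⟩, rfl⟩
    refine ⟨fun i => mul_nonneg hc.le (hx1 i), ?_⟩
    have : ∑ i, (c • x) i = c * ∑ i, x i := by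
      simp [Finset.mul_sum]
    rw [this]
    calc c * ∑ i, x i ≤ c * 1 := by
          exact mul_le_mul_of_nonneg_left hx2 hc.le
      _ = c := mul_one c
  · rintro ⟨h1, h2⟩
    refine ⟨c⁻¹ • y, ⟨fun i => mul_nonneg (inv_nonneg.mpr hc.le) (h1 i), ?_⟩,
      smul_inv_smul₀ hc.ne' y⟩
    have : ∑ i, (c⁻¹ • y) i = c⁻¹ * ∑ i, y i := by simp [Finset.mul_sum]
    rw [this]
    calc c⁻¹ * ∑ i, y i ≤ c⁻¹ * c := by
          exact mul_le_mul_of_nonneg_left h2 (inv_nonneg.mpr hc.le)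
      _ = 1 := inv_mul_cancel₀ hc.ne'

lemma pos_vol {n : ℕ} {s U : Set (Fin n → ℝ)} (hconv : Convex ℝ s)
    (hint : (interior s).Nonempty) {x : Fin n → ℝ} (hx : x ∈ s)
    (hU : IsOpen U) (hxU : x ∈ U) : 0 < volume (s ∩ U) := by
  obtain ⟨y, hy⟩ := hint
  have hcont : Continuous (fun t : ℝ => x + t • (y - x)) := by continuity
  have hx0 : (fun t : ℝ => x + t • (y - x)) 0 ∈ U := by simpa using hxU
  have hnhds : ∀ᶠ t in nhds (0:ℝ), x + t • (y - x) ∈ U :=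
    hcont.continuousAt.eventually_mem (hU.mem_nhds hx0)
  have h2 : ∀ᶠ t in nhdsWithin 0 (Ioi (0:ℝ)), x + t • (y - x) ∈ U :=
    nhdsWithin_le_nhds hnhds
  have h3 : ∀ᶠ t in nhdsWithin 0 (Ioi (0:ℝ)), t ∈ Ioc (0:ℝ) 1 :=
    Filter.eventually_of_mem (Ioc_mem_nhdsGT_of_mem ⟨le_refl 0, zero_lt_one⟩) fun t ht => ht
  obtain ⟨t, htU, htIoc⟩ := (h2.and h3).exists
  have hz : x + t • (y - x) ∈ interior s :=
    hconv.add_smul_sub_mem_interior hx hy htIoc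
  calc (0:ENNReal) < volume (interior s ∩ U) :=
        (isOpen_interior.inter hU).measure_pos volume ⟨_, hz, htU⟩
    _ ≤ volume (s ∩ U) := measure_mono (inter_subset_inter_left _ interior_subset)


end EqAux

/-- Key combinatorial step of the equality case: an `n`-dimensional polytope `R` with
`nΔₙ ⊆ R ⊆ ℝⁿ₊`, such that `R − 𝟙` is reflexive, the barycenter of `R` is `𝟙` and
`vol(R) = (n+1)ⁿ/n!`, must equal `(n+1)Δₙ`. -/
theorem equality_case_polytope (n : ℕ) (hn : 1 ≤ n)
    (R : Set (Fin n → ℝ))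
    (hpoly : ∃ W : Set (Fin n → ℝ), W.Finite ∧ R = convexHull ℝ W)
    (hfull : (interior R).Nonempty)
    (hsub1 : (((n : ℝ) • ·) '' unimodularSimplex n) ⊆ R)
    (hsub2 : R ⊆ {x | ∀ i, 0 ≤ x i})
    (hrefl : IsReflexive ((fun x => x - fun _ => (1 : ℝ)) '' R))
    (hbary : ∫ x in R, x = (volume R).toReal • (fun _ => (1 : ℝ)))
    (hvol : (volume R).toReal = ((n : ℝ) + 1) ^ n / (n.factorial : ℝ)) :
    R = (((n : ℝ) + 1) • ·) '' unimodularSimplex n := by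
  classical
  obtain ⟨W, hWfin, hRW⟩ := hpoly
  have hRconv : Convex ℝ R := by rw [hRW]; exact convex_convexHull ℝ W
  have hRcomp : IsCompact R := by rw [hRW]; exact hWfin.isCompact_convexHull (𝕜 := ℝ)
  have hRclosed : IsClosed R := hRcomp.isClosed
  have hRmeas : MeasurableSet R := hRclosed.measurableSet
  have hRfin : volume R ≠ ⊤ := hRcomp.measure_lt_top.ne
  have hcpos : (0:ℝ) < (n:ℝ) + 1 := by positivity
  rw [EqAux.image_smul n hcpos]
  set P := EqAux.Simp n ((n:ℝ) + 1) with hPdef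
  have hPclosed : IsClosed P := EqAux.isClosed_simp n _
  have hPmeas : MeasurableSet P := hPclosed.measurableSet
  have hPcomp : IsCompact P := EqAux.isCompact_simp n _
  have hPconv : Convex ℝ P := EqAux.convex_simp n _
  -- coordinates of the barycenter
  have hIntId : IntegrableOn (fun x : Fin n → ℝ => x) R volume :=
    continuous_id.continuousOn.integrableOn_compact hRcomp
  have hcoord : ∀ i, ∫ x in R, x i = (volume R).toReal := by
    intro i
    have h := (ContinuousLinearMap.proj (R := ℝ) (φ := fun _ : Fin n => ℝ) i).integral_comp_comm
      hIntId
    simp only [ContinuousLinearMap.proj_apply] at h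
    rw [hbary] at h
    simpa using h
  have hIntCoord : ∀ i, IntegrableOn (fun x : Fin n → ℝ => x i) R volume := fun i =>
    (continuous_apply i).continuousOn.integrableOn_compact hRcomp
  have hIntSum : IntegrableOn (fun x : Fin n → ℝ => ∑ i, x i) R volume :=
    (EqAux.continuous_sum n).continuousOn.integrableOn_compact hRcomp
  have hsumR : ∫ x in R, (∑ i, x i) = n * (volume R).toReal := by
    rw [integral_finset_sum Finset.univ (fun i _ => hIntCoord i)]
    simp only [hcoord]
    simp [mul_comm]
  have hIntConst : IntegrableOn (fun _ : Fin n → ℝ => (n:ℝ) + 1) R volume :=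
    integrableOn_const hRcomp.measure_lt_top.ne
  have hIntf : IntegrableOn (fun x : Fin n → ℝ => (n:ℝ) + 1 - ∑ i, x i) R volume :=
    hIntConst.sub hIntSum
  have hfR : ∫ x in R, ((n:ℝ) + 1 - ∑ i, x i) = (volume R).toReal := by
    rw [integral_sub hIntConst hIntSum, setIntegral_const, hsumR, smul_eq_mul, measureReal_def]
    ring
  have hfac : (((n + 1).factorial : ℝ)) = ((n:ℝ) + 1) * (n.factorial : ℝ) := by
    rw [Nat.factorial_succ]; push_cast; ring
  have hnfac : ((n.factorial : ℝ)) ≠ 0 := Nat.cast_ne_zero.mpr (Nat.factorial_ne_zero n)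
  have hfP : ∫ x in P, ((n:ℝ) + 1 - ∑ i, x i) = (volume R).toReal := by
    have h := EqAux.simp_setIntegral n 1 hcpos.le
    simp only [pow_one] at h
    rw [hPdef, h, hvol, hfac, Nat.factorial_one, pow_succ]
    push_cast
    field_simp
  have hvolP : volume P = ENNReal.ofReal ((volume R).toReal) := by
    rw [hPdef, EqAux.simp_volume n hcpos.le, hvol]
  -- splitting the integrals
  have hIntfP : IntegrableOn (fun x : Fin n → ℝ => (n:ℝ) + 1 - ∑ i, x i) P volume :=
    (continuous_const.sub (EqAux.continuous_sum n)).continuousOn.integrableOn_compact hPcomp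
  have hdisjR : Disjoint (R ∩ P) (R \ P) :=
    Set.disjoint_left.mpr fun z hz hz2 => hz2.2 hz.2
  have hdisjP : Disjoint (P ∩ R) (P \ R) :=
    Set.disjoint_left.mpr fun z hz hz2 => hz2.2 hz.2
  have hsplitR : ∫ x in R, ((n:ℝ) + 1 - ∑ i, x i)
      = (∫ x in R ∩ P, ((n:ℝ) + 1 - ∑ i, x i)) + ∫ x in R \ P, ((n:ℝ) + 1 - ∑ i, x i) := by
    have h := setIntegral_union hdisjR (hRmeas.diff hPmeas)
      (hIntf.mono_set Set.inter_subset_left) (hIntf.mono_set Set.diff_subset)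
    rw [Set.inter_union_diff] at h
    exact h
  have hsplitP : ∫ x in P, ((n:ℝ) + 1 - ∑ i, x i)
      = (∫ x in P ∩ R, ((n:ℝ) + 1 - ∑ i, x i)) + ∫ x in P \ R, ((n:ℝ) + 1 - ∑ i, x i) := by
    have h := setIntegral_union hdisjP (hPmeas.diff hRmeas)
      (hIntfP.mono_set Set.inter_subset_left) (hIntfP.mono_set Set.diff_subset)
    rw [Set.inter_union_diff] at h
    exact h
  have hdiff_eq : ∫ x in R \ P, ((n:ℝ) + 1 - ∑ i, x i)
      = ∫ x in P \ R, ((n:ℝ) + 1 - ∑ i, x i) := by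
    rw [hfR] at hsplitR
    rw [hfP, Set.inter_comm] at hsplitP
    linarith
  have hneg : ∀ x ∈ R \ P, ((n:ℝ) + 1 - ∑ i, x i) < 0 := by
    rintro x ⟨hxR, hxP⟩
    have h0 : ∀ i, 0 ≤ x i := hsub2 hxR
    by_contra hcon
    push_neg at hcon
    exact hxP (EqAux.mem_simp_iff.mpr ⟨h0, by linarith⟩)
  have hge : 0 ≤ ∫ x in P \ R, ((n:ℝ) + 1 - ∑ i, x i) :=
    setIntegral_nonneg (hPmeas.diff hRmeas) fun x hx => by
      have h := (EqAux.mem_simp_iff.mp hx.1).2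
      linarith
  have hle : ∫ x in R \ P, ((n:ℝ) + 1 - ∑ i, x i) ≤ 0 :=
    setIntegral_nonpos (hRmeas.diff hPmeas) fun x hx => (hneg x hx).le
  have hzero : ∫ x in R \ P, ((n:ℝ) + 1 - ∑ i, x i) = 0 :=
    le_antisymm hle (hdiff_eq ▸ hge)
  -- volume (R \ P) = 0
  have hnull : volume (R \ P) = 0 := by
    have hgR : IntegrableOn (fun x : Fin n → ℝ => (∑ i, x i) - ((n:ℝ) + 1)) R volume :=
      hIntSum.sub hIntConst
    have hgint : IntegrableOn (fun x : Fin n → ℝ => (∑ i, x i) - ((n:ℝ) + 1)) (R \ P) volume :=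
      hgR.mono_set Set.diff_subset
    have hgnn : 0 ≤ᵐ[volume.restrict (R \ P)]
        (fun x : Fin n → ℝ => (∑ i, x i) - ((n:ℝ) + 1)) :=
      (ae_restrict_iff' (hRmeas.diff hPmeas)).mpr
        (Filter.Eventually.of_forall fun x hx => by have := hneg x hx; simp only [Pi.zero_apply]; linarith)
    have hgz : ∫ x in R \ P, ((∑ i, x i) - ((n:ℝ) + 1)) = 0 := by
      have hfun : (fun x : Fin n → ℝ => (∑ i, x i) - ((n:ℝ) + 1))
          = fun x => -((n:ℝ) + 1 - ∑ i, x i) := by funext x; ring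
      rw [hfun, integral_neg, hzero, neg_zero]
    have hae := (setIntegral_eq_zero_iff_of_nonneg_ae hgnn hgint).mp hgz
    rw [Filter.EventuallyEq, ae_iff] at hae
    rw [Measure.restrict_apply' (hRmeas.diff hPmeas)] at hae
    refine measure_mono_null ?_ hae
    intro x hx
    refine ⟨?_, hx⟩
    have hxneg := hneg x hx
    simp only [Set.mem_setOf_eq, Pi.zero_apply]
    intro h
    rw [sub_eq_zero] at h
    rw [← h] at hxneg
    linarith
  -- R ⊆ P
  have hRsubP : R ⊆ P := by
    intro x hxR
    by_contra hxP
    have hlt : (n:ℝ) + 1 < ∑ i, x i := by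
      by_contra hle2
      push_neg at hle2
      exact hxP (EqAux.mem_simp_iff.mpr ⟨hsub2 hxR, hle2⟩)
    have hU : IsOpen {z : Fin n → ℝ | (n:ℝ) + 1 < ∑ i, z i} :=
      isOpen_lt continuous_const (EqAux.continuous_sum n)
    have hpos := EqAux.pos_vol hRconv hfull hxR hU hlt
    have hsubset : R ∩ {z : Fin n → ℝ | (n:ℝ) + 1 < ∑ i, z i} ⊆ R \ P := by
      rintro z ⟨hzR, hzU⟩
      exact ⟨hzR, fun hzP => absurd (EqAux.mem_simp_iff.mp hzP).2 (not_le.mpr hzU)⟩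
    have hcontra := lt_of_lt_of_le hpos (measure_mono hsubset)
    rw [hnull] at hcontra
    exact lt_irrefl 0 hcontra
  -- volume (P \ R) = 0
  have hvolR : volume R = ENNReal.ofReal ((volume R).toReal) :=
    (ENNReal.ofReal_toReal hRfin).symm
  have hPRnull : volume (P \ R) = 0 := by
    rw [measure_diff hRsubP hRmeas.nullMeasurableSet hRfin, hvolP, ← hvolR, tsub_self]
  -- interior of P is nonempty
  have hPint : (interior P).Nonempty := by
    refine ⟨fun _ => 1/2, ?_⟩
    have hWopen : IsOpen {z : Fin n → ℝ | (∀ i, 0 < z i) ∧ ∑ i, z i < (n:ℝ) + 1} := by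
      have hsplit : {z : Fin n → ℝ | (∀ i, 0 < z i) ∧ ∑ i, z i < (n:ℝ) + 1}
          = (⋂ i, (fun z : Fin n → ℝ => z i) ⁻¹' Set.Ioi 0)
            ∩ {z | ∑ i, z i < (n:ℝ) + 1} := by
        ext z; simp [forall_and]
      rw [hsplit]
      exact IsOpen.inter
        (isOpen_iInter_of_finite fun i => isOpen_Ioi.preimage (continuous_apply i))
        (isOpen_lt (EqAux.continuous_sum n) continuous_const)
    have hWsub : {z : Fin n → ℝ | (∀ i, 0 < z i) ∧ ∑ i, z i < (n:ℝ) + 1} ⊆ P :=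
      fun z hz => EqAux.mem_simp_iff.mpr ⟨fun i => (hz.1 i).le, hz.2.le⟩
    refine interior_maximal hWsub hWopen ?_
    constructor
    · intro i; norm_num
    · rw [Finset.sum_const, Finset.card_univ, Fintype.card_fin, nsmul_eq_mul]
      have hnn : (0:ℝ) ≤ n := Nat.cast_nonneg n
      linarith
  -- P ⊆ R
  have hPsubR : P ⊆ R := by
    intro x hxP
    by_contra hxR
    have hpos := EqAux.pos_vol hPconv hPint hxP hRclosed.isOpen_compl hxR
    rw [← Set.diff_eq] at hpos
    rw [hPRnull] at hpos
    exact lt_irrefl 0 hpos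
  exact Set.Subset.antisymm hRsubP hPsubR
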